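/- Let μ(x) = 1/(π(1+x²)) for x ∈ ℝ. Then for every p ∈ ℝ, μ(p) = ∫_ℝ ∫_0^1 μ(p − t q) · μ(p − t q + q) dt dq. (Characterization identity for the critical profile of the one-dimensional modified Keller–Segel equation.) -/

import Mathlib

open MeasureTheory Real

open Filter Topology

/-- The critical profile `μ(x) = 1/(π(1+x²))` (Cauchy density). -/
noncomputable def cauchyProfile (x : ℝ) : ℝ := 1 / (π * (1 + x ^ 2))


lemma integrable_invsq (c : ℝ) (hc : 0 < c) :
    Integrable fun x : ℝ => (c ^ 2 + x ^ 2)⁻¹ := by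
  have h : (fun x : ℝ => (c ^ 2 + x ^ 2)⁻¹)
      = fun x => c⁻¹ * (c⁻¹ * (1 + (x / c) ^ 2)⁻¹) := by
    funext x
    have h1 : (0:ℝ) < 1 + (x/c)^2 := by positivity
    field_simp
  rw [h]
  exact ((integrable_inv_one_add_sq.comp_div hc.ne').const_mul _).const_mul _

lemma integrable_L (c d m : ℝ) (hc : 0 < c) (hd : 0 < d) :
    Integrable fun x : ℝ => ((c ^ 2 + x ^ 2) * (d ^ 2 + (x - m) ^ 2))⁻¹ := by
  have hcont : Continuous fun x : ℝ => ((c ^ 2 + x ^ 2) * (d ^ 2 + (x - m) ^ 2))⁻¹ := by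
    apply Continuous.inv₀ (by continuity)
    intro x; positivity
  apply (((integrable_invsq c hc).const_mul ((d ^ 2)⁻¹)).mono' hcont.aestronglyMeasurable)
  filter_upwards with x
  rw [Real.norm_eq_abs, abs_of_nonneg (by positivity), mul_inv]
  rw [mul_comm ((c ^ 2 + x ^ 2)⁻¹)]
  have h1 : (d ^ 2 + (x - m) ^ 2)⁻¹ ≤ (d ^ 2)⁻¹ := by
    apply inv_anti₀ (by positivity)
    nlinarith [sq_nonneg (x - m)]
  exact mul_le_mul_of_nonneg_right h1 (by positivity)

lemma cauchy_conv (c d m : ℝ) (hc : 0 < c) (hd : 0 < d)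
    (hQ : (c - d) ^ 2 + m ^ 2 ≠ 0) :
    ∫ x : ℝ, ((c ^ 2 + x ^ 2) * (d ^ 2 + (x - m) ^ 2))⁻¹
      = π * (c + d) / (c * d * ((c + d) ^ 2 + m ^ 2)) := by
  have hQ' : 0 < (c - d) ^ 2 + m ^ 2 :=
    lt_of_le_of_ne (by positivity) (Ne.symm hQ)
  set N : ℝ := ((c + d) ^ 2 + m ^ 2) * ((c - d) ^ 2 + m ^ 2) with hNdef
  have hP : (0:ℝ) < (c + d) ^ 2 + m ^ 2 := by positivity
  have hN : 0 < N := by positivity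
  set A : ℝ := 2 * m / N with hA
  set B : ℝ := (d ^ 2 - c ^ 2 + m ^ 2) / N with hB
  set D : ℝ := (c ^ 2 - d ^ 2 + m ^ 2) / N with hD
  set F : ℝ → ℝ := fun x => A / 2 * (Real.log (c ^ 2 + x ^ 2) - Real.log (d ^ 2 + (x - m) ^ 2))
      + B / c * Real.arctan (x / c) + D / d * Real.arctan ((x - m) / d) with hF
  have hderiv : ∀ x, HasDerivAt F (((c ^ 2 + x ^ 2) * (d ^ 2 + (x - m) ^ 2))⁻¹) x := by
    intro x
    have h1 : (0:ℝ) < c ^ 2 + x ^ 2 := by positivity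
    have h2 : (0:ℝ) < d ^ 2 + (x - m) ^ 2 := by positivity
    have d1 : HasDerivAt (fun y : ℝ => Real.log (c ^ 2 + y ^ 2)) (2 * x / (c ^ 2 + x ^ 2)) x := by
      have := ((hasDerivAt_pow 2 x).const_add (c ^ 2)).log h1.ne'
      simpa using this
    have d2 : HasDerivAt (fun y : ℝ => Real.log (d ^ 2 + (y - m) ^ 2))
        (2 * (x - m) / (d ^ 2 + (x - m) ^ 2)) x := by
      have dq : HasDerivAt (fun y : ℝ => d ^ 2 + (y - m) ^ 2) (2 * (x - m)) x := by
        have := (((hasDerivAt_id x).sub_const m).pow 2).const_add (d ^ 2)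
        simpa using this
      have := dq.log h2.ne'
      simpa using this
    have d3 : HasDerivAt (fun y : ℝ => Real.arctan (y / c)) (1 / (1 + (x / c) ^ 2) * (1 / c)) x := by
      have := (Real.hasDerivAt_arctan (x / c)).comp x ((hasDerivAt_id x).div_const c)
      simpa [Function.comp_def] using this
    have d4 : HasDerivAt (fun y : ℝ => Real.arctan ((y - m) / d))
        (1 / (1 + ((x - m) / d) ^ 2) * (1 / d)) x := by
      have := (Real.hasDerivAt_arctan ((x - m) / d)).comp x
        (((hasDerivAt_id x).sub_const m).div_const d)
      simpa [Function.comp_def] using this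
    have := (((d1.sub d2).const_mul (A / 2)).add (d3.const_mul (B / c))).add
      (d4.const_mul (D / d))
    refine this.congr_deriv ?_
    rw [hA, hB, hD]
    have hx1 : (1 + (x / c) ^ 2) = (c ^ 2 + x ^ 2) / c ^ 2 := by field_simp
    have hx2 : (1 + ((x - m) / d) ^ 2) = (d ^ 2 + (x - m) ^ 2) / d ^ 2 := by field_simp
    rw [hx1, hx2]
    field_simp
    ring
  have hlim_log : Tendsto (fun x : ℝ => Real.log (c ^ 2 + x ^ 2) - Real.log (d ^ 2 + (x - m) ^ 2))
      atBot (𝓝 0) ∧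
      Tendsto (fun x : ℝ => Real.log (c ^ 2 + x ^ 2) - Real.log (d ^ 2 + (x - m) ^ 2))
      atTop (𝓝 0) := by
    have key : ∀ l : Filter ℝ, Tendsto (fun x : ℝ => x⁻¹) l (𝓝 0) → (∀ᶠ x in l, x ≠ 0) →
        Tendsto (fun x : ℝ => Real.log (c ^ 2 + x ^ 2) - Real.log (d ^ 2 + (x - m) ^ 2)) l (𝓝 0) := by
      intro l hl hne
      have cont : ContinuousAt (fun y : ℝ =>
          (c ^ 2 * y ^ 2 + 1) / (d ^ 2 * y ^ 2 + (1 - m * y) ^ 2)) 0 := by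
        apply ContinuousAt.div (by fun_prop) (by fun_prop)
        norm_num
      have hG := cont.tendsto.comp hl
      norm_num at hG
      have hratio : Tendsto (fun x : ℝ => (c ^ 2 + x ^ 2) / (d ^ 2 + (x - m) ^ 2)) l (𝓝 1) := by
        apply hG.congr'
        filter_upwards [hne] with x hx
        have h2 : (0:ℝ) < d ^ 2 + (x - m) ^ 2 := by positivity
        simp only [Function.comp_apply]
        rw [div_eq_div_iff]
        · field_simp
        · have : (0:ℝ) < d ^ 2 * (x⁻¹) ^ 2 + (1 - m * x⁻¹) ^ 2 := by
            have hxx : (0:ℝ) < (x⁻¹) ^ 2 := by positivity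
            positivity
          exact this.ne'
        · exact h2.ne'
      have := (Real.continuousAt_log (by norm_num : (1:ℝ) ≠ 0)).tendsto.comp hratio
      simp only [Real.log_one] at this
      apply this.congr'
      filter_upwards [hne] with x hx
      have h1 : (0:ℝ) < c ^ 2 + x ^ 2 := by positivity
      have h2 : (0:ℝ) < d ^ 2 + (x - m) ^ 2 := by positivity
      simp only [Function.comp_apply]
      rw [Real.log_div h1.ne' h2.ne']
    constructor
    · apply key
      · exact tendsto_inv₀_cobounded.mono_left (by rw [Real.cobounded_eq]; exact le_sup_left)
      · filter_upwards [eventually_lt_atBot (0:ℝ)] with x hx using hx.ne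
    · apply key
      · exact tendsto_inv₀_cobounded.mono_left (by rw [Real.cobounded_eq]; exact le_sup_right)
      · filter_upwards [eventually_gt_atTop (0:ℝ)] with x hx using hx.ne'
  have harctan_top : ∀ a b : ℝ, 0 < b →
      Tendsto (fun x : ℝ => Real.arctan ((x - a) / b)) atTop (𝓝 (π / 2)) := by
    intro a b hb
    have h1 : Tendsto (fun x : ℝ => (x - a) / b) atTop atTop :=
      (tendsto_atTop_add_const_right _ (-a) tendsto_id).atTop_div_const hb
    exact (tendsto_nhds_of_tendsto_nhdsWithin tendsto_arctan_atTop).comp h1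
  have harctan_bot : ∀ a b : ℝ, 0 < b →
      Tendsto (fun x : ℝ => Real.arctan ((x - a) / b)) atBot (𝓝 (-(π / 2))) := by
    intro a b hb
    have h1 : Tendsto (fun x : ℝ => (x - a) / b) atBot atBot :=
      (tendsto_atBot_add_const_right _ (-a) tendsto_id).atBot_div_const hb
    exact (tendsto_nhds_of_tendsto_nhdsWithin tendsto_arctan_atBot).comp h1
  have htop : Tendsto F atTop (𝓝 (A / 2 * 0 + B / c * (π / 2) + D / d * (π / 2))) := by
    apply Tendsto.add
    apply Tendsto.add
    · exact hlim_log.2.const_mul _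
    · have := (harctan_top 0 c hc).const_mul (B / c)
      simpa using this
    · exact (harctan_top m d hd).const_mul _
  have hbot : Tendsto F atBot (𝓝 (A / 2 * 0 + B / c * (-(π / 2)) + D / d * (-(π / 2)))) := by
    apply Tendsto.add
    apply Tendsto.add
    · exact hlim_log.1.const_mul _
    · have := (harctan_bot 0 c hc).const_mul (B / c)
      simpa using this
    · exact (harctan_bot m d hd).const_mul _
  rw [integral_of_hasDerivAt_of_tendsto hderiv (integrable_L c d m hc hd) hbot htop]
  rw [hB, hD, hNdef]
  field_simp
  ring

lemma cp_cont : Continuous cauchyProfile := by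
  apply continuous_const.div (by continuity)
  intro x
  have := Real.pi_pos
  positivity

lemma cp_nonneg (x : ℝ) : 0 ≤ cauchyProfile x := by
  unfold cauchyProfile
  have := Real.pi_pos
  positivity

lemma prod_eq (p t : ℝ) (ht0 : 0 < t) (ht1 : t < 1) (q : ℝ) :
    cauchyProfile (p - t * q) * cauchyProfile (p - t * q + q)
      = (π ^ 2 * t ^ 2 * (1 - t) ^ 2)⁻¹ *
        (((t⁻¹) ^ 2 + (q - p / t) ^ 2) *
          (((1 - t)⁻¹) ^ 2 + ((q - p / t) - (-(p / (1 - t)) - p / t)) ^ 2))⁻¹ := by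
  have h1t : (0:ℝ) < 1 - t := by linarith
  have hπ : π ≠ 0 := Real.pi_ne_zero
  unfold cauchyProfile
  have e1 : (0:ℝ) < 1 + (p - t * q) ^ 2 := by positivity
  have e2 : (0:ℝ) < 1 + (p - t * q + q) ^ 2 := by positivity
  have e3 : (0:ℝ) < (t⁻¹) ^ 2 + (q - p / t) ^ 2 := by positivity
  have e4 : (0:ℝ) < ((1 - t)⁻¹) ^ 2 + ((q - p / t) - (-(p / (1 - t)) - p / t)) ^ 2 := by
    positivity
  field_simp
  ring

lemma section_integrable (p t : ℝ) (ht0 : 0 < t) (ht1 : t < 1) :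
    Integrable fun q : ℝ =>
      cauchyProfile (p - t * q) * cauchyProfile (p - t * q + q) := by
  have h1t : (0:ℝ) < 1 - t := by linarith
  have hc : (0:ℝ) < t⁻¹ := by positivity
  have hd : (0:ℝ) < (1 - t)⁻¹ := by positivity
  have : (fun q : ℝ => cauchyProfile (p - t * q) * cauchyProfile (p - t * q + q))
      = fun q : ℝ => (π ^ 2 * t ^ 2 * (1 - t) ^ 2)⁻¹ *
        ((fun x : ℝ => (((t⁻¹) ^ 2 + x ^ 2) *
          (((1 - t)⁻¹) ^ 2 + (x - (-(p / (1 - t)) - p / t)) ^ 2))⁻¹) (q - p / t)) :=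
    funext fun q => prod_eq p t ht0 ht1 q
  rw [this]
  exact ((integrable_L _ _ (-(p / (1 - t)) - p / t) hc hd).comp_sub_right (p / t)).const_mul _

lemma section_integral (p t : ℝ) (ht0 : 0 < t) (ht1 : t < 1) (ht2 : t ≠ 1 / 2) :
    ∫ q : ℝ, cauchyProfile (p - t * q) * cauchyProfile (p - t * q + q)
      = cauchyProfile p := by
  have h1t : (0:ℝ) < 1 - t := by linarith
  have hπ : π ≠ 0 := Real.pi_ne_zero
  have hc : (0:ℝ) < t⁻¹ := by positivity
  have hd : (0:ℝ) < (1 - t)⁻¹ := by positivity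
  have hQ : (t⁻¹ - (1 - t)⁻¹) ^ 2 + (-(p / (1 - t)) - p / t) ^ 2 ≠ 0 := by
    have hne : t⁻¹ - (1 - t)⁻¹ ≠ 0 := by
      refine sub_ne_zero.mpr fun h => ht2 ?_
      have := inv_injective h
      linarith
    positivity
  set f : ℝ → ℝ := fun x => (((t⁻¹) ^ 2 + x ^ 2) *
      (((1 - t)⁻¹) ^ 2 + (x - (-(p / (1 - t)) - p / t)) ^ 2))⁻¹ with hf
  calc ∫ q : ℝ, cauchyProfile (p - t * q) * cauchyProfile (p - t * q + q)
      = ∫ q : ℝ, (π ^ 2 * t ^ 2 * (1 - t) ^ 2)⁻¹ * f (q - p / t) := by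
        exact integral_congr_ae (Eventually.of_forall fun q => prod_eq p t ht0 ht1 q)
    _ = (π ^ 2 * t ^ 2 * (1 - t) ^ 2)⁻¹ * ∫ q : ℝ, f (q - p / t) :=
        integral_const_mul _ _
    _ = (π ^ 2 * t ^ 2 * (1 - t) ^ 2)⁻¹ * ∫ x : ℝ, f x := by
        rw [integral_sub_right_eq_self f (p / t)]
    _ = (π ^ 2 * t ^ 2 * (1 - t) ^ 2)⁻¹ *
        (π * (t⁻¹ + (1 - t)⁻¹) / (t⁻¹ * (1 - t)⁻¹ *
          ((t⁻¹ + (1 - t)⁻¹) ^ 2 + (-(p / (1 - t)) - p / t) ^ 2))) := by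
        rw [hf, cauchy_conv _ _ _ hc hd hQ]
    _ = cauchyProfile p := by
        unfold cauchyProfile
        have h5 : (0:ℝ) < (t⁻¹ + (1 - t)⁻¹) ^ 2 + (-(p / (1 - t)) - p / t) ^ 2 := by positivity
        have h6 : (0:ℝ) < 1 + p ^ 2 := by positivity
        field_simp
        ring

/-- Characterization identity for the critical profile of the one-dimensional
modified Keller–Segel equation:
`μ(p) = ∫_ℝ ∫₀¹ μ(p − t q) μ(p − t q + q) dt dq`. -/
theorem cauchyProfile_characterization (p : ℝ) :
    cauchyProfile p =
      ∫ q : ℝ, ∫ t in (0 : ℝ)..1,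
        cauchyProfile (p - t * q) * cauchyProfile (p - t * q + q) := by
  have h01 : (0:ℝ) ≤ 1 := zero_le_one
  set ν : Measure ℝ := volume.restrict (Set.Ioc (0:ℝ) 1) with hν
  have hIoo : ∀ᵐ t ∂ν, t ∈ Set.Ioo (0:ℝ) 1 := by
    rw [hν, ← Measure.restrict_congr_set Ioo_ae_eq_Ioc]
    exact ae_restrict_mem measurableSet_Ioo
  have hhalf : ∀ᵐ t ∂ν, t ≠ 1 / 2 := by
    apply ae_restrict_of_ae
    rw [ae_iff]
    have : {t : ℝ | ¬t ≠ 1 / 2} = {(1 / 2 : ℝ)} := by ext x; simp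
    rw [this]
    exact Real.volume_singleton
  have hcont : Continuous (Function.uncurry fun q t : ℝ =>
      cauchyProfile (p - t * q) * cauchyProfile (p - t * q + q)) := by
    apply Continuous.mul
    · exact cp_cont.comp (by fun_prop)
    · exact cp_cont.comp (by fun_prop)
  have hInt : Integrable (Function.uncurry fun q t : ℝ =>
      cauchyProfile (p - t * q) * cauchyProfile (p - t * q + q)) (volume.prod ν) := by
    rw [integrable_prod_iff' hcont.aestronglyMeasurable]
    constructor
    · filter_upwards [hIoo] with t ht
      exact section_integrable p t ht.1 ht.2
    · have hfin : Integrable (fun _ : ℝ => cauchyProfile p) ν := by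
        rw [hν]
        exact integrableOn_const (by rw [Real.volume_Ioc]; norm_num)
      apply hfin.congr
      filter_upwards [hIoo, hhalf] with t ht ht2
      simp only [Function.uncurry_apply_pair]
      rw [← section_integral p t ht.1 ht.2 ht2]
      apply integral_congr_ae (Eventually.of_forall fun q => ?_)
      rw [Real.norm_eq_abs, abs_of_nonneg (mul_nonneg (cp_nonneg _) (cp_nonneg _))]
  calc cauchyProfile p
      = ∫ _ in Set.Ioc (0:ℝ) 1, cauchyProfile p := by
        rw [setIntegral_const, Real.volume_real_Ioc]
        norm_num
    _ = ∫ t in Set.Ioc (0:ℝ) 1, ∫ q : ℝ,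
          cauchyProfile (p - t * q) * cauchyProfile (p - t * q + q) := by
        apply integral_congr_ae
        filter_upwards [hIoo, hhalf] with t h1 h2
        exact (section_integral p t h1.1 h1.2 h2).symm
    _ = ∫ q : ℝ, ∫ t in Set.Ioc (0:ℝ) 1,
          cauchyProfile (p - t * q) * cauchyProfile (p - t * q + q) :=
        (integral_integral_swap hInt).symm
    _ = ∫ q : ℝ, ∫ t in (0 : ℝ)..1,
          cauchyProfile (p - t * q) * cauchyProfile (p - t * q + q) := by
        refine integral_congr_ae (Eventually.of_forall fun q => ?_)
        exact (intervalIntegral.integral_of_le h01).symm
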